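/- Let M be a finite-horizon MDP with H+1 decision steps (t = 0,…,H), let π* be a deterministic expert policy, and let π be a (possibly stochastic) learned policy. Suppose that for every t ∈ {0,…,H}, the probability of a mistake under the expert's state distribution satisfies E_{s ∼ d_t^{π*}}[1 − π(π*(s)|s)] ≤ ε. Then the expected number of mistakes of π under its own trajectory distribution satisfies ℓ(π) = E_{τ ∼ p_π}[Σ_{t=0}^{H} 𝟙(a_t ≠ π*(s_t))] ≤ ε·(H+1)(H+2)/2, and in particular ℓ(π) ≤ (H+1)²·ε (behavioral cloning error bound, upper-bound part of Theorem 1). -/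

import Mathlib

open Finset

/-- Probability of a trajectory `τ = (s_0, a_0, …, s_H, a_H)` in a finite-horizon MDP
with `H + 1` decision steps, initial distribution `d0`, transition kernel `T` and
policy `π`. -/
noncomputable def trajP {S A : Type} [Fintype S] [Fintype A] (H : ℕ)
    (d0 : S → ℝ) (T : S → A → S → ℝ) (π : S → A → ℝ)
    (τ : (Fin (H + 1) → S) × (Fin (H + 1) → A)) : ℝ :=
  d0 (τ.1 0) * (∏ t : Fin (H + 1), π (τ.1 t) (τ.2 t)) *
    ∏ t : Fin H, T (τ.1 t.castSucc) (τ.2 t.castSucc) (τ.1 t.succ)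

/-- Time-indexed state distribution `d_t^π(s)`: probability that `s_t = s` under the
trajectory distribution `p_π`. -/
noncomputable def stateDistAt {S A : Type} [Fintype S] [Fintype A] [DecidableEq S] (H : ℕ)
    (d0 : S → ℝ) (T : S → A → S → ℝ) (π : S → A → ℝ) (t : Fin (H + 1)) (s : S) : ℝ :=
  ∑ τ : (Fin (H + 1) → S) × (Fin (H + 1) → A),
    if τ.1 t = s then trajP H d0 T π τ else 0

/-- A deterministic policy viewed as a stochastic policy. -/
noncomputable def detPolicy {S A : Type} [DecidableEq A] (πstar : S → A) : S → A → ℝ :=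
  fun _s a => if a = πstar _s then 1 else 0

/-- Expected number of mistakes `ℓ(π) = E_{τ ∼ p_π}[Σ_{t=0}^H 𝟙(a_t ≠ π*(s_t))]`. -/
noncomputable def mistakes {S A : Type} [Fintype S] [Fintype A] [DecidableEq A] (H : ℕ)
    (d0 : S → ℝ) (T : S → A → S → ℝ) (π : S → A → ℝ) (πstar : S → A) : ℝ :=
  ∑ τ : (Fin (H + 1) → S) × (Fin (H + 1) → A),
    trajP H d0 T π τ *
      ((univ.filter fun t : Fin (H + 1) => τ.2 t ≠ πstar (τ.1 t)).card : ℝ)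

section BC

variable {S A : Type} [Fintype S] [Fintype A] [DecidableEq S] [DecidableEq A]
variable (d0 : S → ℝ) (T : S → A → S → ℝ)

lemma sum_snoc_real {X : Type} [Fintype X] (n : ℕ) (f : (Fin (n + 1) → X) → ℝ) :
    ∑ g : Fin (n + 1) → X, f g = ∑ g : Fin n → X, ∑ x : X, f (Fin.snoc g x) := by
  rw [← (Fin.snocEquiv (fun _ => X)).sum_comp f, Fintype.sum_prod_type, Finset.sum_comm]
  rfl

lemma trajP_nonneg (π : S → A → ℝ) (hd0 : ∀ s, 0 ≤ d0 s) (hT0 : ∀ s a s', 0 ≤ T s a s')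
    (hπ0 : ∀ s a, 0 ≤ π s a) (H : ℕ) (τ : (Fin (H + 1) → S) × (Fin (H + 1) → A)) :
    0 ≤ trajP H d0 T π τ :=
  mul_nonneg (mul_nonneg (hd0 _) (Finset.prod_nonneg fun _ _ => hπ0 _ _))
    (Finset.prod_nonneg fun _ _ => hT0 _ _ _)

lemma trajP_snoc (π : S → A → ℝ) (n : ℕ) (σ : Fin (n + 1) → S) (α : Fin (n + 1) → A)
    (s : S) (a : A) :
    trajP (n + 1) d0 T π (Fin.snoc σ s, Fin.snoc α a)
      = trajP n d0 T π (σ, α) * (T (σ (Fin.last n)) (α (Fin.last n)) s * π s a) := by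
  have h0 : Fin.snoc (α := fun _ => S) σ s 0 = σ 0 := by
    have : (0 : Fin (n + 1 + 1)) = Fin.castSucc 0 := rfl
    rw [this, Fin.snoc_castSucc]
  have hπp : (∏ x : Fin (n + 1 + 1), π (Fin.snoc (α := fun _ => S) σ s x) (Fin.snoc (α := fun _ => A) α a x))
      = (∏ x : Fin (n + 1), π (σ x) (α x)) * π s a := by
    rw [Fin.prod_univ_castSucc]
    simp only [Fin.snoc_castSucc, Fin.snoc_last]
  have hTp : (∏ x : Fin (n + 1),
        T (Fin.snoc (α := fun _ => S) σ s x.castSucc) (Fin.snoc (α := fun _ => A) α a x.castSucc) (Fin.snoc (α := fun _ => S) σ s x.succ))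
      = (∏ x : Fin n, T (σ x.castSucc) (α x.castSucc) (σ x.succ))
          * T (σ (Fin.last n)) (α (Fin.last n)) s := by
    rw [Fin.prod_univ_castSucc]
    simp only [Fin.succ_castSucc, Fin.succ_last, Fin.snoc_castSucc, Fin.snoc_last]
  unfold trajP
  simp only
  rw [hπp, hTp, h0]
  ring


lemma castLE_comp_id {X : Type} {t : ℕ} (g : Fin (t + 1) → X) (hle : t + 1 ≤ t + 1) :
    g ∘ Fin.castLE hle = g := by
  funext i
  have : Fin.castLE hle i = i := by ext; simp
  rw [Function.comp_apply, this]

lemma snoc_comp_castLE {X : Type} {t m : ℕ} (h : t ≤ m) (g : Fin (m + 1) → X) (x : X) :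
    (Fin.snoc (α := fun _ => X) g x) ∘ Fin.castLE (Nat.succ_le_succ (h.trans (Nat.le_succ m)))
      = g ∘ Fin.castLE (Nat.succ_le_succ h) := by
  funext i
  have hcast : Fin.castLE (Nat.succ_le_succ (h.trans (Nat.le_succ m))) i
      = Fin.castSucc (Fin.castLE (Nat.succ_le_succ h) i) := by ext; simp
  simp only [Function.comp_apply, hcast, Fin.snoc_castSucc]

lemma marg (π : S → A → ℝ) (hT1 : ∀ s a, ∑ s', T s a s' = 1)
    (hπ1 : ∀ s, ∑ a, π s a = 1) :
    ∀ (n t : ℕ) (h : t ≤ n) (φ : (Fin (t + 1) → S) × (Fin (t + 1) → A) → ℝ),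
    (∑ τ : (Fin (n + 1) → S) × (Fin (n + 1) → A),
        φ (τ.1 ∘ Fin.castLE (Nat.succ_le_succ h), τ.2 ∘ Fin.castLE (Nat.succ_le_succ h))
          * trajP n d0 T π τ)
      = ∑ τ : (Fin (t + 1) → S) × (Fin (t + 1) → A), φ τ * trajP t d0 T π τ := by
  have hidcase : ∀ (t : ℕ) (h : t ≤ t) (φ : (Fin (t + 1) → S) × (Fin (t + 1) → A) → ℝ),
      (∑ τ : (Fin (t + 1) → S) × (Fin (t + 1) → A),
          φ (τ.1 ∘ Fin.castLE (Nat.succ_le_succ h), τ.2 ∘ Fin.castLE (Nat.succ_le_succ h))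
            * trajP t d0 T π τ)
        = ∑ τ : (Fin (t + 1) → S) × (Fin (t + 1) → A), φ τ * trajP t d0 T π τ := by
    intro t h φ
    apply Finset.sum_congr rfl
    intro τ _
    rw [castLE_comp_id, castLE_comp_id]
  intro n
  induction n with
  | zero =>
    intro t h φ
    interval_cases t
    exact hidcase 0 h φ
  | succ m ih =>
    intro t h φ
    rcases eq_or_lt_of_le h with rfl | hlt
    · exact hidcase (m + 1) h φ
    · have ht : t ≤ m := Nat.lt_succ_iff.mp hlt
      rw [Fintype.sum_prod_type]
      rw [sum_snoc_real (m + 1) (fun σg => ∑ αg : Fin (m + 1 + 1) → A,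
        φ (σg ∘ Fin.castLE (Nat.succ_le_succ h), αg ∘ Fin.castLE (Nat.succ_le_succ h))
          * trajP (m + 1) d0 T π (σg, αg))]
      have hinner : ∀ (σ : Fin (m + 1) → S) (s : S),
          (∑ αg : Fin (m + 1 + 1) → A,
            φ ((Fin.snoc σ s) ∘ Fin.castLE (Nat.succ_le_succ h),
               αg ∘ Fin.castLE (Nat.succ_le_succ h)) * trajP (m + 1) d0 T π (Fin.snoc σ s, αg))
          = ∑ α : Fin (m + 1) → A, ∑ a : A,
              φ (σ ∘ Fin.castLE (Nat.succ_le_succ ht), α ∘ Fin.castLE (Nat.succ_le_succ ht))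
                * (trajP m d0 T π (σ, α) * (T (σ (Fin.last m)) (α (Fin.last m)) s * π s a)) := by
        intro σ s
        rw [sum_snoc_real (m + 1) (fun αg =>
          φ ((Fin.snoc σ s) ∘ Fin.castLE (Nat.succ_le_succ h),
             αg ∘ Fin.castLE (Nat.succ_le_succ h)) * trajP (m + 1) d0 T π (Fin.snoc σ s, αg))]
        apply Finset.sum_congr rfl; intro α _
        apply Finset.sum_congr rfl; intro a _
        rw [trajP_snoc, snoc_comp_castLE ht, snoc_comp_castLE ht]
      calc (∑ σ : Fin (m + 1) → S, ∑ s : S, ∑ αg : Fin (m + 1 + 1) → A,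
              φ ((Fin.snoc σ s) ∘ Fin.castLE (Nat.succ_le_succ h),
                 αg ∘ Fin.castLE (Nat.succ_le_succ h)) * trajP (m + 1) d0 T π (Fin.snoc σ s, αg))
          = ∑ σ : Fin (m + 1) → S, ∑ α : Fin (m + 1) → A,
              φ (σ ∘ Fin.castLE (Nat.succ_le_succ ht), α ∘ Fin.castLE (Nat.succ_le_succ ht))
                * trajP m d0 T π (σ, α) := by
            apply Finset.sum_congr rfl; intro σ _
            rw [Finset.sum_congr rfl (fun s _ => hinner σ s), Finset.sum_comm]
            apply Finset.sum_congr rfl; intro α _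
            simp only [← Finset.mul_sum, hπ1, hT1, mul_one]
        _ = ∑ τ : (Fin (t + 1) → S) × (Fin (t + 1) → A), φ τ * trajP t d0 T π τ := by
            rw [← ih t ht φ, Fintype.sum_prod_type]


lemma pi_le_one (π : S → A → ℝ) (hπ0 : ∀ s a, 0 ≤ π s a) (hπ1 : ∀ s, ∑ a, π s a = 1)
    (s : S) (a : A) : π s a ≤ 1 := by
  rw [← hπ1 s]
  exact Finset.single_le_sum (fun a' _ => hπ0 s a') (mem_univ a)

lemma onestep (π : S → A → ℝ) (πstar : S → A)
    (hd0 : ∀ s, 0 ≤ d0 s) (hT0 : ∀ s a s', 0 ≤ T s a s')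
    (hπ0 : ∀ s a, 0 ≤ π s a) (hπ1 : ∀ s, ∑ a, π s a = 1) (m : ℕ) :
    ∑ τ : (Fin (m + 1) → S) × (Fin (m + 1) → A),
      (if (∀ u : Fin (m + 1), u.val < m → τ.2 u = πstar (τ.1 u)) ∧
          τ.2 (Fin.last m) ≠ πstar (τ.1 (Fin.last m)) then (1 : ℝ) else 0)
        * trajP m d0 T π τ
    ≤ ∑ τ : (Fin (m + 1) → S) × (Fin (m + 1) → A),
      (1 - π (τ.1 (Fin.last m)) (πstar (τ.1 (Fin.last m))))
        * trajP m d0 T (detPolicy πstar) τ := by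
  rw [Fintype.sum_prod_type, Fintype.sum_prod_type]
  apply Finset.sum_le_sum
  intro σ _
  set e : Fin (m + 1) → A := fun u => πstar (σ u) with he
  set K : ℝ := d0 (σ 0) * ∏ u : Fin m, T (σ u.castSucc) (e u.castSucc) (σ u.succ) with hK
  have hK0 : 0 ≤ K := mul_nonneg (hd0 _) (Finset.prod_nonneg fun _ _ => hT0 _ _ _)
  set c : Fin (m + 1) → A → ℝ := fun u a =>
    if u.val < m then (if a = e u then π (σ u) a else 0)
    else (if a = e u then 0 else π (σ u) a) with hc
  -- rewrite each summand of LHS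
  have hL : ∀ α : Fin (m + 1) → A,
      (if (∀ u : Fin (m + 1), u.val < m → α u = πstar (σ u)) ∧
          α (Fin.last m) ≠ πstar (σ (Fin.last m)) then (1 : ℝ) else 0)
        * trajP m d0 T π (σ, α)
      = (∏ u : Fin (m + 1), c u (α u)) * K := by
    intro α
    by_cases hcond : (∀ u : Fin (m + 1), u.val < m → α u = πstar (σ u)) ∧
        α (Fin.last m) ≠ πstar (σ (Fin.last m))
    · rw [if_pos hcond, one_mul]
      have hprodc : (∏ u : Fin (m + 1), c u (α u)) = ∏ u : Fin (m + 1), π (σ u) (α u) := by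
        apply Finset.prod_congr rfl
        intro u _
        by_cases hu : u.val < m
        · simp only [hc, if_pos hu, if_pos (hcond.1 u hu)]; exact if_pos (hcond.1 u hu)
        · have hulast : u = Fin.last m := by
            have hv := u.isLt; ext; simp only [Fin.val_last]; omega
          rw [hulast]
          simp only [hc]
          rw [if_neg (by simp : ¬ ((Fin.last m : Fin (m + 1)) : ℕ) < m), if_neg hcond.2]
      have hprodT : (∏ u : Fin m, T (σ u.castSucc) (α u.castSucc) (σ u.succ))
          = ∏ u : Fin m, T (σ u.castSucc) (e u.castSucc) (σ u.succ) := by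
        apply Finset.prod_congr rfl
        intro u _
        rw [hcond.1 u.castSucc (by simpa using u.isLt)]
      unfold trajP
      simp only
      rw [hprodc, hprodT, hK]
      ring
    · rw [if_neg hcond, zero_mul]
      push_neg at hcond
      have : (∏ u : Fin (m + 1), c u (α u)) = 0 := by
        by_cases hall : ∀ u : Fin (m + 1), u.val < m → α u = πstar (σ u)
        · have hlast := hcond hall
          apply Finset.prod_eq_zero (mem_univ (Fin.last m))
          simp only [hc]
          rw [if_neg (by simp : ¬ ((Fin.last m : Fin (m + 1)) : ℕ) < m), if_pos hlast]
        · push_neg at hall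
          obtain ⟨u, hu, hne⟩ := hall
          apply Finset.prod_eq_zero (mem_univ u)
          simp only [hc]
          rw [if_pos hu, if_neg hne]
      rw [this, zero_mul]
  -- rewrite RHS inner sum
  have hR : (∑ α : Fin (m + 1) → A,
      (1 - π (σ (Fin.last m)) (πstar (σ (Fin.last m))))
        * trajP m d0 T (detPolicy πstar) (σ, α))
      = (1 - π (σ (Fin.last m)) (πstar (σ (Fin.last m)))) * K := by
    rw [← Finset.mul_sum]
    congr 1
    have : ∑ α : Fin (m + 1) → A, trajP m d0 T (detPolicy πstar) (σ, α)
        = trajP m d0 T (detPolicy πstar) (σ, e) := by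
      apply Fintype.sum_eq_single
      intro α hα
      have : ∃ u, α u ≠ e u := by
        by_contra hcon
        push_neg at hcon
        exact hα (funext hcon)
      obtain ⟨u, hu⟩ := this
      unfold trajP
      simp only
      have : (∏ t : Fin (m + 1), detPolicy πstar (σ t) (α t)) = 0 := by
        apply Finset.prod_eq_zero (mem_univ u)
        unfold detPolicy
        rw [if_neg hu]
      rw [this, mul_zero, zero_mul]
    rw [this]
    unfold trajP
    simp only
    have : (∏ t : Fin (m + 1), detPolicy πstar (σ t) (e t)) = 1 :=
      Finset.prod_eq_one fun u _ => by unfold detPolicy; rw [if_pos rfl]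
    rw [this, mul_one, hK]
  rw [hR]
  rw [Finset.sum_congr rfl fun α _ => hL α, ← Finset.sum_mul, ← Fintype.prod_sum c]
  -- compute the product of sums
  have hcs : ∀ u : Fin (m + 1), (∑ a : A, c u a)
      = if u.val < m then π (σ u) (e u) else 1 - π (σ (Fin.last m)) (πstar (σ (Fin.last m))) := by
    intro u
    by_cases hu : u.val < m
    · simp only [hc, if_pos hu]
      rw [Finset.sum_ite_eq' univ (e u) (fun a => π (σ u) a)]
      simp
    · have hulast : u = Fin.last m := by
        have hv := u.isLt; ext; simp only [Fin.val_last]; omega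
      rw [hulast]
      simp only [hc]
      simp only [Fin.val_last, lt_self_iff_false, if_false]
      have hsplit : ∑ a : A, (if a = e (Fin.last m) then 0 else π (σ (Fin.last m)) a)
          = (∑ a : A, π (σ (Fin.last m)) a) - π (σ (Fin.last m)) (e (Fin.last m)) := by
        rw [eq_sub_iff_add_eq]
        have : π (σ (Fin.last m)) (e (Fin.last m))
            = ∑ a : A, (if a = e (Fin.last m) then π (σ (Fin.last m)) a else 0) := by
          rw [Finset.sum_ite_eq' univ (e (Fin.last m)) (fun a => π (σ (Fin.last m)) a)]
          simp
        rw [this, ← Finset.sum_add_distrib]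
        apply Finset.sum_congr rfl
        intro a _
        by_cases hae : a = e (Fin.last m) <;> simp [hae]
      rw [hsplit, hπ1]
  rw [Fin.prod_univ_castSucc (f := fun u : Fin (m + 1) => ∑ a : A, c u a)]
  have h1 : ∀ j : Fin m, (∑ a : A, c j.castSucc a) = π (σ j.castSucc) (e j.castSucc) := by
    intro j
    rw [hcs j.castSucc, if_pos (by simpa using j.isLt)]
  have h2 : (∑ a : A, c (Fin.last m) a)
      = 1 - π (σ (Fin.last m)) (πstar (σ (Fin.last m))) := by
    rw [hcs (Fin.last m), if_neg (by simp)]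
  rw [Finset.prod_congr rfl fun j _ => h1 j, h2]
  have hP0 : 0 ≤ ∏ j : Fin m, π (σ j.castSucc) (e j.castSucc) :=
    Finset.prod_nonneg fun j _ => hπ0 _ _
  have hP1 : (∏ j : Fin m, π (σ j.castSucc) (e j.castSucc)) ≤ 1 :=
    Finset.prod_le_one (fun j _ => hπ0 _ _) (fun j _ => pi_le_one π hπ0 hπ1 _ _)
  have hq : 0 ≤ 1 - π (σ (Fin.last m)) (πstar (σ (Fin.last m))) :=
    sub_nonneg.mpr (pi_le_one π hπ0 hπ1 _ _)
  nlinarith [mul_nonneg hq hK0]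

end BC

lemma gauss_real (n : ℕ) : ∑ i ∈ Finset.range n, ((i : ℝ) + 1) = n * (n + 1) / 2 := by
  induction n with
  | zero => simp
  | succ k ih => rw [Finset.sum_range_succ, ih]; push_cast; ring

/-- **Behavioral cloning error bound (upper-bound part of Theorem 1).**
If the per-step mistake probability of `π` under the expert's state distribution is at
most `ε` at every time step, then the expected number of mistakes of `π` under its own
trajectory distribution is at most `ε·(H+1)(H+2)/2 ≤ (H+1)²·ε`. -/
theorem behavioral_cloning_error_upper_bound
    {S A : Type} [Fintype S] [Fintype A] [DecidableEq S] [DecidableEq A]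
    (H : ℕ) (d0 : S → ℝ) (T : S → A → S → ℝ)
    (πstar : S → A) (π : S → A → ℝ) (ε : ℝ)
    (hd00 : ∀ s, 0 ≤ d0 s) (hd01 : ∑ s, d0 s = 1)
    (hT0 : ∀ s a s', 0 ≤ T s a s') (hT1 : ∀ s a, ∑ s', T s a s' = 1)
    (hπ0 : ∀ s a, 0 ≤ π s a) (hπ1 : ∀ s, ∑ a, π s a = 1)
    (hmistake : ∀ t : Fin (H + 1),
      ∑ s, stateDistAt H d0 T (detPolicy πstar) t s * (1 - π s (πstar s)) ≤ ε) :
    mistakes H d0 T π πstar ≤ ε * ((H : ℝ) + 1) * ((H : ℝ) + 2) / 2 ∧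
      mistakes H d0 T π πstar ≤ ((H : ℝ) + 1) ^ 2 * ε := by
  have hdet1 : ∀ s, ∑ a, detPolicy πstar s a = 1 := by
    intro s
    unfold detPolicy
    rw [Finset.sum_ite_eq' univ (πstar s) (fun _ => (1 : ℝ))]
    simp
  have hdet0 : ∀ s a, (0 : ℝ) ≤ detPolicy πstar s a := by
    intro s a; unfold detPolicy; split <;> norm_num
  have hε0 : 0 ≤ ε := by
    refine le_trans ?_ (hmistake 0)
    apply Finset.sum_nonneg
    intro s _
    apply mul_nonneg
    · apply Finset.sum_nonneg
      intro τ _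
      split
      · exact trajP_nonneg d0 T _ hd00 hT0 hdet0 H τ
      · exact le_refl 0
    · exact sub_nonneg.mpr (pi_le_one π hπ0 hπ1 s (πstar s))
  set FM : Fin (H + 1) → ((Fin (H + 1) → S) × (Fin (H + 1) → A)) → ℝ := fun t' τ =>
    if (∀ u : Fin (H + 1), u.val < t'.val → τ.2 u = πstar (τ.1 u)) ∧
        τ.2 t' ≠ πstar (τ.1 t') then 1 else 0 with hFM
  have hFM0 : ∀ t' τ, 0 ≤ FM t' τ := by
    intro t' τ; rw [hFM]; dsimp only; split <;> norm_num
  -- step D : per-first-mistake bound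
  have hF : ∀ t' : Fin (H + 1),
      (∑ τ : (Fin (H + 1) → S) × (Fin (H + 1) → A), trajP H d0 T π τ * FM t' τ) ≤ ε := by
    intro t'
    have hm : t'.val ≤ H := Nat.lt_succ_iff.mp t'.isLt
    set m := t'.val with hmdef
    set φL : (Fin (m + 1) → S) × (Fin (m + 1) → A) → ℝ := fun τ =>
      if (∀ u : Fin (m + 1), u.val < m → τ.2 u = πstar (τ.1 u)) ∧
          τ.2 (Fin.last m) ≠ πstar (τ.1 (Fin.last m)) then (1 : ℝ) else 0 with hφL
    set ψ : (Fin (m + 1) → S) × (Fin (m + 1) → A) → ℝ := fun τ =>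
      1 - π (τ.1 (Fin.last m)) (πstar (τ.1 (Fin.last m))) with hψ
    have hcastlast : Fin.castLE (Nat.succ_le_succ hm) (Fin.last m) = t' := by
      ext; simp [hmdef]
    have step1 : (∑ τ : (Fin (H + 1) → S) × (Fin (H + 1) → A), trajP H d0 T π τ * FM t' τ)
        = ∑ τ : (Fin (H + 1) → S) × (Fin (H + 1) → A),
            φL (τ.1 ∘ Fin.castLE (Nat.succ_le_succ hm), τ.2 ∘ Fin.castLE (Nat.succ_le_succ hm))
              * trajP H d0 T π τ := by
      apply Finset.sum_congr rfl
      intro τ _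
      rw [mul_comm]
      congr 1
      rw [hFM, hφL]
      dsimp only
      apply if_congr _ rfl rfl
      constructor
      · rintro ⟨h1, h2⟩
        constructor
        · intro u hu
          simp only [Function.comp_apply]
          exact h1 (Fin.castLE (Nat.succ_le_succ hm) u) (by simpa using hu)
        · simpa only [Function.comp_apply, hcastlast] using h2
      · rintro ⟨h1, h2⟩
        constructor
        · intro u hu
          have hcast : Fin.castLE (Nat.succ_le_succ hm) ⟨u.val, by omega⟩ = u := by
            ext; simp
          have := h1 ⟨u.val, by omega⟩ hu
          simpa only [Function.comp_apply, hcast] using this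
        · rw [← hcastlast]
          simpa only [Function.comp_apply] using h2
    have step5 : (∑ τ : (Fin (H + 1) → S) × (Fin (H + 1) → A),
        ψ (τ.1 ∘ Fin.castLE (Nat.succ_le_succ hm), τ.2 ∘ Fin.castLE (Nat.succ_le_succ hm))
          * trajP H d0 T (detPolicy πstar) τ)
        = ∑ s, stateDistAt H d0 T (detPolicy πstar) t' s * (1 - π s (πstar s)) := by
      unfold stateDistAt
      rw [Finset.sum_congr rfl (fun s _ => Finset.sum_mul _ _ _), Finset.sum_comm]
      apply Finset.sum_congr rfl
      intro τ _
      rw [hψ]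
      dsimp only [Function.comp_apply]
      rw [hcastlast]
      have : ∀ s : S, (if τ.1 t' = s then trajP H d0 T (detPolicy πstar) τ else 0)
            * (1 - π s (πstar s))
          = if τ.1 t' = s then trajP H d0 T (detPolicy πstar) τ * (1 - π s (πstar s))
            else 0 := by
        intro s
        split <;> simp
      rw [Finset.sum_congr rfl fun s _ => this s,
        Finset.sum_ite_eq univ (τ.1 t')
          (fun s => trajP H d0 T (detPolicy πstar) τ * (1 - π s (πstar s)))]
      simp [mul_comm]
    calc (∑ τ : (Fin (H + 1) → S) × (Fin (H + 1) → A), trajP H d0 T π τ * FM t' τ)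
        = ∑ τ : (Fin (m + 1) → S) × (Fin (m + 1) → A), φL τ * trajP m d0 T π τ := by
          rw [step1]; exact marg d0 T π hT1 hπ1 H m hm φL
      _ ≤ ∑ τ : (Fin (m + 1) → S) × (Fin (m + 1) → A), ψ τ * trajP m d0 T (detPolicy πstar) τ :=
          onestep d0 T π πstar hd00 hT0 hπ0 hπ1 m
      _ = ∑ s, stateDistAt H d0 T (detPolicy πstar) t' s * (1 - π s (πstar s)) := by
          rw [← marg d0 T (detPolicy πstar) hT1 hdet1 H m hm ψ, step5]
      _ ≤ ε := hmistake t'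
  -- pointwise first-mistake decomposition
  have hpoint : ∀ (τ : (Fin (H + 1) → S) × (Fin (H + 1) → A)) (t : Fin (H + 1)),
      (if τ.2 t ≠ πstar (τ.1 t) then (1 : ℝ) else 0) ≤ ∑ t' ∈ Finset.Iic t, FM t' τ := by
    intro τ t
    by_cases hmis : τ.2 t ≠ πstar (τ.1 t)
    · rw [if_pos hmis]
      have hne : (univ.filter (fun u : Fin (H + 1) => u ≤ t ∧ τ.2 u ≠ πstar (τ.1 u))).Nonempty :=
        ⟨t, by simp [hmis]⟩
      obtain ⟨t0, ht0mem, ht0min⟩ := Finset.exists_min_image _ id hne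
      rw [Finset.mem_filter] at ht0mem
      obtain ⟨-, ht0t, ht0mis⟩ := ht0mem
      have hFM1 : FM t0 τ = 1 := by
        rw [hFM]
        dsimp only
        rw [if_pos]
        refine ⟨?_, ht0mis⟩
        intro u hu
        by_contra hcon
        have hut : u ≤ t := Fin.le_def.mpr (by have := Fin.le_def.mp ht0t; omega)
        have humem : u ∈ univ.filter (fun u : Fin (H + 1) => u ≤ t ∧ τ.2 u ≠ πstar (τ.1 u)) := by
          rw [Finset.mem_filter]
          exact ⟨mem_univ u, hut, hcon⟩
        have h2 : t0 ≤ u := ht0min u humem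
        exact absurd hu (not_lt.mpr (Fin.le_def.mp h2))
      calc (1 : ℝ) = FM t0 τ := hFM1.symm
        _ ≤ ∑ t' ∈ Finset.Iic t, FM t' τ :=
            Finset.single_le_sum (fun t' _ => hFM0 t' τ) (Finset.mem_Iic.mpr ht0t)
    · rw [if_neg hmis]
      exact Finset.sum_nonneg fun t' _ => hFM0 t' τ
  -- main bound
  have hmain : mistakes H d0 T π πstar ≤ ε * ((H : ℝ) + 1) * ((H : ℝ) + 2) / 2 := by
    unfold mistakes
    have hexp : ∀ τ : (Fin (H + 1) → S) × (Fin (H + 1) → A),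
        trajP H d0 T π τ *
            ((univ.filter fun t : Fin (H + 1) => τ.2 t ≠ πstar (τ.1 t)).card : ℝ)
          = ∑ t : Fin (H + 1), trajP H d0 T π τ *
              (if τ.2 t ≠ πstar (τ.1 t) then (1 : ℝ) else 0) := by
      intro τ
      rw [Finset.card_filter]
      push_cast
      rw [Finset.mul_sum]
    rw [Finset.sum_congr rfl fun τ _ => hexp τ, Finset.sum_comm]
    have hstep : ∀ t : Fin (H + 1),
        (∑ τ : (Fin (H + 1) → S) × (Fin (H + 1) → A),
          trajP H d0 T π τ * (if τ.2 t ≠ πstar (τ.1 t) then (1 : ℝ) else 0))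
        ≤ ((t.val : ℝ) + 1) * ε := by
      intro t
      calc (∑ τ : (Fin (H + 1) → S) × (Fin (H + 1) → A),
            trajP H d0 T π τ * (if τ.2 t ≠ πstar (τ.1 t) then (1 : ℝ) else 0))
          ≤ ∑ τ : (Fin (H + 1) → S) × (Fin (H + 1) → A),
              trajP H d0 T π τ * ∑ t' ∈ Finset.Iic t, FM t' τ := by
            apply Finset.sum_le_sum
            intro τ _
            exact mul_le_mul_of_nonneg_left (hpoint τ t)
              (trajP_nonneg d0 T π hd00 hT0 hπ0 H τ)
        _ = ∑ t' ∈ Finset.Iic t,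
              ∑ τ : (Fin (H + 1) → S) × (Fin (H + 1) → A), trajP H d0 T π τ * FM t' τ := by
            rw [Finset.sum_congr rfl fun τ _ => Finset.mul_sum _ _ _, Finset.sum_comm]
        _ ≤ ∑ t' ∈ Finset.Iic t, ε := Finset.sum_le_sum fun t' _ => hF t'
        _ = ((t.val : ℝ) + 1) * ε := by
            rw [Finset.sum_const, Fin.card_Iic]
            push_cast
            ring
    calc (∑ t : Fin (H + 1), ∑ τ : (Fin (H + 1) → S) × (Fin (H + 1) → A),
          trajP H d0 T π τ * (if τ.2 t ≠ πstar (τ.1 t) then (1 : ℝ) else 0))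
        ≤ ∑ t : Fin (H + 1), ((t.val : ℝ) + 1) * ε := Finset.sum_le_sum fun t _ => hstep t
      _ = (∑ t : Fin (H + 1), ((t.val : ℝ) + 1)) * ε := by rw [Finset.sum_mul]
      _ = ε * ((H : ℝ) + 1) * ((H : ℝ) + 2) / 2 := by
          rw [Fin.sum_univ_eq_sum_range (fun i => ((i : ℝ) + 1)) (H + 1), gauss_real]
          push_cast
          ring
  refine ⟨hmain, le_trans hmain ?_⟩
  have hH : (0 : ℝ) ≤ (H : ℝ) := Nat.cast_nonneg H
  nlinarith [mul_nonneg hε0 hH]
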